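/- Let f : closure(ℂ_+ⁿ) → ℂ be continuous and holomorphic on ℂ_+ⁿ, and let a > 0. Suppose |f| is bounded by M on the set (iℝ)ⁿ and that for all ε > 0 there is a constant c_ε > 0 with |f(z)| ≤ c_ε e^{(a+ε)‖z‖} for all z ∈ closure(ℂ_+ⁿ), where ‖·‖ is any norm on ℂⁿ. Then |f(z)| ≤ M e^{a‖Re z‖} for all z ∈ closure(ℂ_+ⁿ), where Re z denotes the vector (Re z_1, …, Re z_n) ∈ ℝⁿ ⊂ ℂⁿ. -/

import Mathlib

open Complex Filter Set

/-- Musin's multivariable Phragmén–Lindelöf theorem: if `f` is continuous on the closed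
polyhalf-plane `closure(ℂ₊ⁿ)`, holomorphic on `ℂ₊ⁿ`, bounded by `M` on `(iℝ)ⁿ`, and for all
`ε > 0` satisfies `|f(z)| ≤ c_ε e^{(a+ε)‖z‖}` on `closure(ℂ₊ⁿ)` for a norm `‖·‖` on `ℂⁿ`,
then `|f(z)| ≤ M e^{a‖Re z‖}` on `closure(ℂ₊ⁿ)`. -/
theorem phragmen_lindelof_polyhalfplane {n : ℕ}
    (f : (Fin n → ℂ) → ℂ)
    (hcont : ContinuousOn f {z : Fin n → ℂ | ∀ k, 0 ≤ (z k).re})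
    (hhol : DifferentiableOn ℂ f {z : Fin n → ℂ | ∀ k, 0 < (z k).re})
    (a : ℝ) (ha : 0 < a) (M : ℝ)
    (hM : ∀ z : Fin n → ℂ, (∀ k, (z k).re = 0) → ‖f z‖ ≤ M)
    (N : (Fin n → ℂ) → ℝ)
    (hN_add : ∀ v w : Fin n → ℂ, N (v + w) ≤ N v + N w)
    (hN_smul : ∀ (c : ℂ) (v : Fin n → ℂ), N (c • v) = ‖c‖ * N v)
    (hN_pos : ∀ v : Fin n → ℂ, v ≠ 0 → 0 < N v)
    (hgrowth : ∀ ε : ℝ, 0 < ε → ∃ cε : ℝ, 0 < cε ∧ ∀ z : Fin n → ℂ,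
      (∀ k, 0 ≤ (z k).re) → ‖f z‖ ≤ cε * Real.exp ((a + ε) * N z)) :
    ∀ z : Fin n → ℂ, (∀ k, 0 ≤ (z k).re) →
      ‖f z‖ ≤ M * Real.exp (a * N (fun k => ((z k).re : ℂ))) := by
  have hN0 : N 0 = 0 := by
    have := hN_smul 0 0
    simpa using this
  have hNneg : ∀ v, N (-v) = N v := by
    intro v
    have := hN_smul (-1) v
    simpa using this
  have hNnonneg : ∀ v, 0 ≤ N v := by
    intro v
    have h := hN_add v (-v)
    rw [add_neg_cancel, hN0, hNneg] at h
    linarith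
  have hM0 : 0 ≤ M := le_trans (norm_nonneg _) (hM 0 (by simp))
  -- the key interior case
  have key : ∀ z : Fin n → ℂ, (∀ k, 0 < (z k).re) →
      ‖f z‖ ≤ M * Real.exp (a * N (fun k => ((z k).re : ℂ))) := by
    intro z hz
    set v : Fin n → ℂ := fun k => ((z k).re : ℂ) with hv
    set u : Fin n → ℂ := fun k => ((z k).im : ℂ) * Complex.I with hu
    have hεbound : ∀ ε : ℝ, 0 < ε →
        ‖f z‖ ≤ M * Real.exp ((a + ε) * N v) := by
      intro ε hε
      obtain ⟨cε, hcε, hcb⟩ := hgrowth ε hε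
      set b : ℝ := (a + ε) * N v with hb
      have hb0 : 0 ≤ b := mul_nonneg (by linarith) (hNnonneg v)
      set φ : ℂ → (Fin n → ℂ) := fun w => w • v + u with hφ
      have hφre : ∀ w k, ((φ w) k).re = w.re * (z k).re := by
        intro w k
        simp [hφ, hv, hu, Complex.add_re, Complex.mul_re]
      have hφN : ∀ w, N (φ w) ≤ ‖w‖ * N v + N u := by
        intro w
        calc N (φ w) ≤ N (w • v) + N u := hN_add _ _
          _ = ‖w‖ * N v + N u := by rw [hN_smul]
      set F : ℂ → ℂ := fun w => f (φ w) * Complex.exp (((-b : ℝ) : ℂ) * w) with hF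
      have habs : ∀ w : ℂ,
          ‖F w‖ = ‖f (φ w)‖ * Real.exp (-b * w.re) := by
        intro w
        rw [hF]
        simp [norm_mul, Complex.norm_exp, Complex.re_ofReal_mul]
      have hmaps₁ : Set.MapsTo φ {w : ℂ | 0 < w.re} {z : Fin n → ℂ | ∀ k, 0 < (z k).re} :=
        fun w hw k => by rw [hφre]; exact mul_pos hw (hz k)
      have hmaps₂ : Set.MapsTo φ {w : ℂ | 0 ≤ w.re} {z : Fin n → ℂ | ∀ k, 0 ≤ (z k).re} :=
        fun w hw k => by rw [hφre]; exact mul_nonneg hw (hz k).le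
      have hφdiff : Differentiable ℂ φ := (differentiable_id.smul_const v).add_const u
      have hd : DiffContOnCl ℂ F {w : ℂ | 0 < w.re} := by
        constructor
        · exact (hhol.comp hφdiff.differentiableOn hmaps₁).mul
            ((differentiable_const _ |>.mul differentiable_id).cexp.differentiableOn)
        · rw [Complex.closure_setOf_lt_re]
          exact (hcont.comp hφdiff.continuous.continuousOn hmaps₂).mul
            (((continuous_const.mul continuous_id).cexp).continuousOn)
      have hexp : ∃ c < (2 : ℝ), ∃ B,
          F =O[Bornology.cobounded ℂ ⊓ Filter.principal {w : ℂ | 0 < w.re}]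
            fun w => Real.exp (B * ‖w‖ ^ c) := by
        refine ⟨1, by norm_num, b, Asymptotics.IsBigO.of_bound
          (cε * Real.exp ((a + ε) * N u)) ?_⟩
        rw [Filter.eventually_inf_principal]
        refine Filter.Eventually.of_forall fun w hw => ?_
        have hw' : (0 : ℝ) < w.re := hw
        have h1 : ‖f (φ w)‖ ≤ cε * Real.exp ((a + ε) * N (φ w)) :=
          hcb _ (hmaps₂ hw'.le)
        have h2 : Real.exp ((a + ε) * N (φ w)) ≤
            Real.exp ((a + ε) * (‖w‖ * N v + N u)) := by
          apply Real.exp_le_exp.2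
          exact mul_le_mul_of_nonneg_left (hφN w) (by linarith)
        have h3 : Real.exp (-b * w.re) ≤ 1 := by
          apply Real.exp_le_one_iff.2
          nlinarith
        rw [habs w]
        have key2 : ‖f (φ w)‖ * Real.exp (-b * w.re)
            ≤ cε * Real.exp ((a + ε) * (‖w‖ * N v + N u)) := by
          calc ‖f (φ w)‖ * Real.exp (-b * w.re)
              ≤ (cε * Real.exp ((a + ε) * (‖w‖ * N v + N u))) * 1 := by
                apply mul_le_mul (h1.trans (by nlinarith [Real.exp_pos ((a+ε) * N (φ w))]))
                  h3 (Real.exp_nonneg _) (by positivity)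
            _ = cε * Real.exp ((a + ε) * (‖w‖ * N v + N u)) := mul_one _
        refine key2.trans (le_of_eq ?_)
        rw [Real.norm_eq_abs, _root_.abs_of_pos (Real.exp_pos _), Real.rpow_one]
        rw [mul_assoc, ← Real.exp_add]
        ring_nf
        rw [hb]
        ring
      have hre : Filter.IsBoundedUnder (· ≤ ·) Filter.atTop fun x : ℝ => ‖F (x : ℂ)‖ := by
        refine ⟨cε * Real.exp ((a + ε) * N u), Filter.eventually_map.2 ?_⟩
        filter_upwards [Filter.eventually_ge_atTop (0 : ℝ)] with x hx
        have hxre : (0 : ℝ) ≤ (x : ℂ).re := by simpa using hx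
        have h1 : ‖f (φ x)‖ ≤ cε * Real.exp ((a + ε) * N (φ x)) :=
          hcb _ (hmaps₂ hxre)
        have h2 : N (φ (x : ℂ)) ≤ x * N v + N u := by
          have := hφN (x : ℂ)
          rwa [Complex.norm_real, Real.norm_eq_abs, _root_.abs_of_nonneg hx] at this
        rw [habs]
        have hxr : ((x : ℂ)).re = x := by simp
        rw [hxr]
        calc ‖f (φ x)‖ * Real.exp (-b * x)
            ≤ (cε * Real.exp ((a + ε) * (x * N v + N u))) * Real.exp (-b * x) := by
              apply mul_le_mul_of_nonneg_right _ (Real.exp_nonneg _)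
              exact h1.trans (by
                apply mul_le_mul_of_nonneg_left _ hcε.le
                exact Real.exp_le_exp.2 (mul_le_mul_of_nonneg_left h2 (by linarith)))
          _ = cε * Real.exp ((a + ε) * N u) := by
              rw [mul_assoc, ← Real.exp_add]
              congr 1
              rw [hb]
              ring
      have him : ∀ x : ℝ, ‖F ((x : ℂ) * Complex.I)‖ ≤ M := by
        intro x
        have hre0 : ((x : ℂ) * Complex.I).re = 0 := by simp
        rw [habs, hre0]
        simp only [mul_zero, Real.exp_zero, mul_one]
        exact hM _ (fun k => by rw [hφre, hre0, zero_mul])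
      have hPL := PhragmenLindelof.right_half_plane_of_bounded_on_real
        hd hexp hre him (z := 1) (by norm_num)
      have hφ1 : φ 1 = z := by
        funext k
        simp [hφ, hv, hu, Complex.re_add_im]
      rw [habs, hφ1] at hPL
      simp only [Complex.one_re, mul_one] at hPL
      calc ‖f z‖
          = (‖f z‖ * Real.exp (-b)) * Real.exp b := by
            rw [mul_assoc, ← Real.exp_add]; simp
        _ ≤ M * Real.exp b := mul_le_mul_of_nonneg_right hPL (Real.exp_nonneg _)
    -- let ε → 0
    have htend : Filter.Tendsto (fun ε : ℝ => M * Real.exp ((a + ε) * N v))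
        (nhdsWithin 0 (Set.Ioi 0)) (nhds (M * Real.exp (a * N v))) := by
      have hc : Continuous fun ε : ℝ => M * Real.exp ((a + ε) * N v) :=
        (Real.continuous_exp.comp ((continuous_const.add continuous_id).mul
          continuous_const)).const_smul M
      have h := hc.tendsto 0
      simp only [add_zero] at h
      exact h.mono_left nhdsWithin_le_nhds
    exact ge_of_tendsto htend
      (Filter.eventually_of_mem self_mem_nhdsWithin fun ε hε => hεbound ε hε)
  -- boundary case by continuity
  intro z hz
  have hδbound : ∀ δ : ℝ, δ ∈ Set.Ioi (0:ℝ) →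
      ‖f (fun k => z k + (δ : ℂ))‖ ≤
        M * Real.exp (a * (N (fun k => ((z k).re : ℂ)) + δ * N (fun _ => 1))) := by
    intro δ hδ
    have hδ' : (0:ℝ) < δ := hδ
    have h1 := key (fun k => z k + (δ : ℂ)) (fun k => by
      simp only [Complex.add_re, Complex.ofReal_re]
      have := hz k; linarith)
    have h2 : N (fun k => (((z k + (δ : ℂ)).re : ℝ) : ℂ)) ≤
        N (fun k => ((z k).re : ℂ)) + δ * N (fun _ => 1) := by
      have heq : (fun k : Fin n => (((z k + (δ : ℂ)).re : ℝ) : ℂ)) =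
          (fun k => ((z k).re : ℂ)) + (δ : ℂ) • (fun _ => (1:ℂ)) := by
        funext k
        simp only [Pi.add_apply, Pi.smul_apply, smul_eq_mul, mul_one, Complex.add_re,
          Complex.ofReal_re]
        push_cast
        ring
      rw [heq]
      calc N _ ≤ N (fun k => ((z k).re : ℂ)) + N ((δ : ℂ) • fun _ => (1:ℂ)) := hN_add _ _
        _ = N (fun k => ((z k).re : ℂ)) + δ * N (fun _ => 1) := by
            rw [hN_smul, Complex.norm_real, Real.norm_eq_abs, _root_.abs_of_pos hδ']
    refine h1.trans ?_
    apply mul_le_mul_of_nonneg_left _ hM0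
    exact Real.exp_le_exp.2 (mul_le_mul_of_nonneg_left h2 ha.le)
  have hpath : Filter.Tendsto (fun δ : ℝ => (fun k => z k + (δ : ℂ)))
      (nhdsWithin 0 (Set.Ioi 0)) (nhdsWithin z {z : Fin n → ℂ | ∀ k, 0 ≤ (z k).re}) := by
    apply tendsto_nhdsWithin_of_tendsto_nhds_of_eventually_within
    · have hc : Continuous fun δ : ℝ => (fun k => z k + (δ : ℂ)) :=
        continuous_pi fun k => continuous_const.add Complex.continuous_ofReal
      have h := hc.tendsto 0
      have : (fun k => z k + ((0:ℝ) : ℂ)) = z := by funext k; simp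
      rw [this] at h
      exact h.mono_left nhdsWithin_le_nhds
    · refine Filter.eventually_of_mem self_mem_nhdsWithin fun δ hδ k => ?_
      have hδ' : (0:ℝ) < δ := hδ
      simp only [Complex.add_re, Complex.ofReal_re]
      have := hz k; linarith
  have hT1 : Filter.Tendsto (fun δ : ℝ => ‖f (fun k => z k + (δ : ℂ))‖)
      (nhdsWithin 0 (Set.Ioi 0)) (nhds (‖f z‖)) :=
    (continuous_norm.tendsto _).comp ((hcont z hz).tendsto.comp hpath)
  have hT2 : Filter.Tendsto
      (fun δ : ℝ => M * Real.exp (a * (N (fun k => ((z k).re : ℂ)) + δ * N (fun _ => 1))))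
      (nhdsWithin 0 (Set.Ioi 0))
      (nhds (M * Real.exp (a * N (fun k => ((z k).re : ℂ))))) := by
    have hc : Continuous fun δ : ℝ =>
        M * Real.exp (a * (N (fun k => ((z k).re : ℂ)) + δ * N (fun _ => 1))) :=
        (Real.continuous_exp.comp (continuous_const.mul (continuous_const.add
          (continuous_id.mul continuous_const)))).const_smul M
    have h := hc.tendsto 0
    simp only [zero_mul, add_zero] at h
    exact h.mono_left nhdsWithin_le_nhds
  exact le_of_tendsto_of_tendsto hT1 hT2
    (Filter.eventually_of_mem self_mem_nhdsWithin hδbound)
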